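/- The function (x,y) ↦ y + x + i x^2 has no zeros in {(x,y) ∈ ℂ² : Im x ≥ 0, Im y ≥ 0, 0 < |x|² + |y|² < 1} ; i.e., on the closed upper bi-half-plane near the origin, y + x + i x² vanishes only at the origin. -/

import Mathlib

/-- The function `(x,y) ↦ y + x + i x²` has no zeros on the product of closed upper
half-planes intersected with the punctured unit ball `0 < |x|² + |y|² < 1`. -/
theorem no_zeros_on_closed_bihalfplane :
    ∀ x y : ℂ, 0 ≤ x.im → 0 ≤ y.im →
      0 < ‖x‖ ^ 2 + ‖y‖ ^ 2 →
      ‖x‖ ^ 2 + ‖y‖ ^ 2 < 1 →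
      y + x + Complex.I * x ^ 2 ≠ 0 := by
  intro x y hx hy hpos hlt heq
  rw [Complex.sq_norm, Complex.sq_norm] at hpos hlt
  have him : (y + x + Complex.I * x ^ 2).im = 0 := by rw [heq]; simp
  have hre : (y + x + Complex.I * x ^ 2).re = 0 := by rw [heq]; simp
  simp [Complex.add_im, Complex.add_re, Complex.mul_im, Complex.mul_re, pow_two,
    Complex.normSq_apply] at him hre hpos hlt
  have h1 : x.im < 1 := by nlinarith [sq_nonneg y.re, sq_nonneg y.im, mul_self_nonneg x.re]
  have h2 : x.re * x.re ≤ x.im * (x.im - 1) := by nlinarith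
  have h3 : x.im * (x.im - 1) ≤ 0 :=
    mul_nonpos_of_nonneg_of_nonpos hx (by linarith)
  have hr0 : x.re = 0 := by nlinarith [mul_self_nonneg x.re]
  have hi0 : x.im = 0 := by nlinarith
  rw [hr0, hi0] at him hre
  simp at him hre
  nlinarith [mul_self_nonneg y.re, mul_self_nonneg y.im]
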